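/- arXiv:2408.07914 — 2 statements merged into one kernel-verified Lean document; each statement's English description precedes it below -/
import Mathlib

section
/- Let X be an n₀ × d₀ real matrix, Z an n₀ × (d - d₀) real matrix, and λ > 0, and suppose XXᵀ + ZZᵀ is invertible. Then Xᵀ(XXᵀ + ZZᵀ)⁻¹ - Xᵀ(XXᵀ + λI)⁻¹ = Xᵀ(XXᵀ + ZZᵀ)⁻¹(λI - ZZᵀ)(XXᵀ + λI)⁻¹. Consequently, the first d₀ coordinates of the minimum norm least squares estimator computed from the augmented predictor matrix [X, Z] equal the ridge estimator β̂_λ = Xᵀ(XXᵀ + λI)⁻¹y plus Xᵀ(XXᵀ + ZZᵀ)⁻¹(λI - ZZᵀ)(XXᵀ + λI)⁻¹y. -/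
open Matrix

noncomputable section

theorem stmt6 (n₀ d₀ k : ℕ) (X : Matrix (Fin n₀) (Fin d₀) ℝ)
    (Z : Matrix (Fin n₀) (Fin k) ℝ) (lam : ℝ) (hlam : 0 < lam)
    (hA : IsUnit (X * Xᵀ + Z * Zᵀ).det) :
    Xᵀ * (X * Xᵀ + Z * Zᵀ)⁻¹ - Xᵀ * (X * Xᵀ + lam • 1)⁻¹ =
      Xᵀ * (X * Xᵀ + Z * Zᵀ)⁻¹ * (lam • 1 - Z * Zᵀ) * (X * Xᵀ + lam • 1)⁻¹ ∧
    ∀ y : Fin n₀ → ℝ, ∀ i : Fin d₀,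
      ((Matrix.fromCols X Z)ᵀ *
          (Matrix.fromCols X Z * (Matrix.fromCols X Z)ᵀ)⁻¹).mulVec y (Sum.inl i) =
      (Xᵀ.mulVec ((X * Xᵀ + lam • 1)⁻¹.mulVec y) +
        (Xᵀ * (X * Xᵀ + Z * Zᵀ)⁻¹ * (lam • 1 - Z * Zᵀ) *
          (X * Xᵀ + lam • 1)⁻¹).mulVec y) i := by
  have hXX : (X * Xᵀ).PosSemidef := by
    simpa using posSemidef_self_mul_conjTranspose X
  have hlam1 : (lam • (1 : Matrix (Fin n₀) (Fin n₀) ℝ)).PosDef := by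
    rw [smul_one_eq_diagonal]
    exact posDef_diagonal_iff.mpr fun _ => hlam
  have hBpd : (X * Xᵀ + lam • (1 : Matrix (Fin n₀) (Fin n₀) ℝ)).PosDef :=
    Matrix.PosDef.posSemidef_add hXX hlam1
  have hB : IsUnit (X * Xᵀ + lam • (1 : Matrix (Fin n₀) (Fin n₀) ℝ)).det :=
    hBpd.det_pos.ne'.isUnit
  have hAinv : (X * Xᵀ + Z * Zᵀ)⁻¹ * (X * Xᵀ + Z * Zᵀ) = 1 := nonsing_inv_mul _ hA
  have hBinv : (X * Xᵀ + lam • 1) * (X * Xᵀ + lam • (1 : Matrix (Fin n₀) (Fin n₀) ℝ))⁻¹ = 1 :=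
    mul_nonsing_inv _ hB
  have key : Xᵀ * (X * Xᵀ + Z * Zᵀ)⁻¹ - Xᵀ * (X * Xᵀ + lam • 1)⁻¹ =
      Xᵀ * (X * Xᵀ + Z * Zᵀ)⁻¹ * (lam • 1 - Z * Zᵀ) * (X * Xᵀ + lam • 1)⁻¹ := by
    have h3 : lam • (1 : Matrix (Fin n₀) (Fin n₀) ℝ) - Z * Zᵀ =
        (X * Xᵀ + lam • 1) - (X * Xᵀ + Z * Zᵀ) := by abel
    rw [h3]
    have : Xᵀ * (X * Xᵀ + Z * Zᵀ)⁻¹ * ((X * Xᵀ + lam • 1) - (X * Xᵀ + Z * Zᵀ)) *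
        (X * Xᵀ + lam • 1)⁻¹ =
        Xᵀ * (X * Xᵀ + Z * Zᵀ)⁻¹ * ((X * Xᵀ + lam • 1) * (X * Xᵀ + lam • 1)⁻¹) -
        Xᵀ * (((X * Xᵀ + Z * Zᵀ)⁻¹ * (X * Xᵀ + Z * Zᵀ)) * (X * Xᵀ + lam • 1)⁻¹) := by
      simp only [Matrix.sub_mul, Matrix.mul_sub, Matrix.mul_assoc]
    rw [this, hBinv, hAinv, Matrix.mul_one, Matrix.one_mul]
  refine ⟨key, fun y i => ?_⟩
  have hcols : Matrix.fromCols X Z * (Matrix.fromCols X Z)ᵀ = X * Xᵀ + Z * Zᵀ := by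
    rw [transpose_fromCols, fromCols_mul_fromRows]
  have hmat : (Matrix.fromCols X Z)ᵀ *
      (Matrix.fromCols X Z * (Matrix.fromCols X Z)ᵀ)⁻¹ =
      Matrix.fromRows (Xᵀ * (X * Xᵀ + Z * Zᵀ)⁻¹) (Zᵀ * (X * Xᵀ + Z * Zᵀ)⁻¹) := by
    rw [hcols, transpose_fromCols, fromRows_mul]
  rw [hmat]
  have : (Matrix.fromRows (Xᵀ * (X * Xᵀ + Z * Zᵀ)⁻¹) (Zᵀ * (X * Xᵀ + Z * Zᵀ)⁻¹)).mulVec y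
      (Sum.inl i) = ((Xᵀ * (X * Xᵀ + Z * Zᵀ)⁻¹).mulVec y) i := by
    rw [fromRows_mulVec]; rfl
  rw [this]
  have heq : Xᵀ * (X * Xᵀ + Z * Zᵀ)⁻¹ =
      Xᵀ * (X * Xᵀ + lam • 1)⁻¹ +
      Xᵀ * (X * Xᵀ + Z * Zᵀ)⁻¹ * (lam • 1 - Z * Zᵀ) * (X * Xᵀ + lam • 1)⁻¹ := by
    rw [← key]; abel
  conv_lhs => rw [heq]
  rw [add_mulVec, ← mulVec_mulVec]
end
end

section
/- Let X be an n₀ × d₀ real matrix and W an m × d₀ real matrix such that XᵀX + WᵀW is positive definite. Then every eigenvalue of the matrix S = (XᵀX + WᵀW)⁻¹XᵀX lies in the interval [0, 1]. Moreover, if WᵀW is positive definite, every eigenvalue of S lies in [0, 1), so S - I is invertible; in particular, if β₀ ≠ 0 then Sβ₀ ≠ β₀, i.e., the OLS estimator computed from the data augmented by noise observations is biased. -/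
open Matrix Module.End

lemma eig_exists {d₀ : ℕ} (S : Matrix (Fin d₀) (Fin d₀) ℝ) (μ : ℝ) (h : μ ∈ spectrum ℝ S) :
    ∃ v : Fin d₀ → ℝ, v ≠ 0 ∧ S.mulVec v = μ • v := by
  rw [← AlgEquiv.spectrum_eq (Matrix.toLinAlgEquiv' (n := Fin d₀) (R := ℝ)),
    ← Module.End.hasEigenvalue_iff_mem_spectrum] at h
  obtain ⟨v, hv⟩ := h.exists_hasEigenvector
  refine ⟨v, hv.2, ?_⟩
  have h2 := hv.apply_eq_smul
  rwa [Matrix.toLinAlgEquiv'_apply] at h2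

theorem stmt8 (n₀ d₀ m : ℕ) (X : Matrix (Fin n₀) (Fin d₀) ℝ)
    (W : Matrix (Fin m) (Fin d₀) ℝ) (hpd : (Xᵀ * X + Wᵀ * W).PosDef) :
    (∀ μ ∈ spectrum ℝ ((Xᵀ * X + Wᵀ * W)⁻¹ * (Xᵀ * X)), μ ∈ Set.Icc (0 : ℝ) 1) ∧
    ((Wᵀ * W).PosDef →
      (∀ μ ∈ spectrum ℝ ((Xᵀ * X + Wᵀ * W)⁻¹ * (Xᵀ * X)), μ ∈ Set.Ico (0 : ℝ) 1) ∧
      IsUnit ((Xᵀ * X + Wᵀ * W)⁻¹ * (Xᵀ * X) - 1) ∧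
      ∀ β₀ : Fin d₀ → ℝ, β₀ ≠ 0 →
        ((Xᵀ * X + Wᵀ * W)⁻¹ * (Xᵀ * X)).mulVec β₀ ≠ β₀) := by
  set A := Xᵀ * X with hAdef
  set B := Wᵀ * W with hBdef
  set M := A + B with hMdef
  have hApsd : A.PosSemidef := by
    rw [hAdef, ← conjTranspose_eq_transpose_of_trivial]
    exact posSemidef_conjTranspose_mul_self X
  have hBpsd : B.PosSemidef := by
    rw [hBdef, ← conjTranspose_eq_transpose_of_trivial]
    exact posSemidef_conjTranspose_mul_self W
  have hMu : IsUnit M.det := hpd.det_pos.ne'.isUnit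
  have hMA : M * (M⁻¹ * A) = A := by
    rw [← Matrix.mul_assoc, Matrix.mul_nonsing_inv M hMu, Matrix.one_mul]
  -- key decomposition for eigenvalues
  have key : ∀ μ ∈ spectrum ℝ (M⁻¹ * A), ∃ v : Fin d₀ → ℝ, v ≠ 0 ∧
      v ⬝ᵥ A.mulVec v = μ * (v ⬝ᵥ M.mulVec v) := by
    intro μ hμ
    obtain ⟨v, hv0, hv⟩ := eig_exists _ μ hμ
    refine ⟨v, hv0, ?_⟩
    have hAv : A.mulVec v = μ • M.mulVec v := by
      calc A.mulVec v = M.mulVec ((M⁻¹ * A).mulVec v) := by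
            rw [Matrix.mulVec_mulVec, hMA]
        _ = M.mulVec (μ • v) := by rw [hv]
        _ = μ • M.mulVec v := by rw [Matrix.mulVec_smul]
    rw [hAv, dotProduct_smul, smul_eq_mul]
  have hMpos : ∀ v : Fin d₀ → ℝ, v ≠ 0 → 0 < v ⬝ᵥ M.mulVec v := by
    intro v hv
    simpa using hpd.dotProduct_mulVec_pos hv
  have hsplit : ∀ v : Fin d₀ → ℝ,
      v ⬝ᵥ M.mulVec v = v ⬝ᵥ A.mulVec v + v ⬝ᵥ B.mulVec v := by
    intro v
    rw [hMdef, Matrix.add_mulVec, dotProduct_add]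
  have hicc : ∀ μ ∈ spectrum ℝ (M⁻¹ * A), μ ∈ Set.Icc (0 : ℝ) 1 := by
    intro μ hμ
    obtain ⟨v, hv0, hkey⟩ := key μ hμ
    have ht := hMpos v hv0
    have ha : 0 ≤ v ⬝ᵥ A.mulVec v := by simpa using hApsd.dotProduct_mulVec_nonneg v
    have hb : 0 ≤ v ⬝ᵥ B.mulVec v := by simpa using hBpsd.dotProduct_mulVec_nonneg v
    constructor
    · nlinarith
    · nlinarith [hsplit v]
  refine ⟨hicc, fun hBpd => ?_⟩
  have hico : ∀ μ ∈ spectrum ℝ (M⁻¹ * A), μ ∈ Set.Ico (0 : ℝ) 1 := by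
    intro μ hμ
    obtain ⟨v, hv0, hkey⟩ := key μ hμ
    have ht := hMpos v hv0
    have ha : 0 ≤ v ⬝ᵥ A.mulVec v := by simpa using hApsd.dotProduct_mulVec_nonneg v
    have hb : 0 < v ⬝ᵥ B.mulVec v := by simpa using hBpd.dotProduct_mulVec_pos hv0
    constructor
    · nlinarith
    · nlinarith [hsplit v]
  have hsub : M⁻¹ * A - 1 = -(M⁻¹ * B) := by
    calc M⁻¹ * A - 1 = M⁻¹ * A - M⁻¹ * M := by
          rw [Matrix.nonsing_inv_mul M hMu]
      _ = M⁻¹ * (A - M) := by rw [Matrix.mul_sub]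
      _ = M⁻¹ * (-B) := by rw [hMdef]; congr 1; abel
      _ = -(M⁻¹ * B) := by rw [Matrix.mul_neg]
  have hunit : IsUnit (M⁻¹ * A - 1) := by
    rw [hsub]
    exact (hpd.inv.isUnit.mul hBpd.isUnit).neg
  refine ⟨hico, hunit, ?_⟩
  intro β₀ hβ hc
  have hinj := (Matrix.mulVec_injective_iff_isUnit.mpr hunit)
  apply hβ
  apply hinj
  simp [Matrix.sub_mulVec, Matrix.mulVec_zero, Matrix.one_mulVec, hc]
end
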